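/- arXiv:1302.4239 — 6 statements merged into one kernel-verified Lean document; each statement's English description precedes it below -/
import Mathlib

section
/- For every integer n ≥ 1, (x+1)^n + ∑_{k=1}^{⌊n/2⌋} (-1)^k (n/(n-k)) C(n-k,k) (x+1)^{n-2k} x^k = 1 + x^n as polynomials in x. -/
open Finset

def Bf (x : ℚ) (m k : ℕ) : ℚ :=
  (-1) ^ k * ((m - k).choose k : ℚ) * (x + 1) ^ (m - 2 * k) * x ^ k

lemma Bf_zero (x : ℚ) (m k : ℕ) (h : m < 2 * k) : Bf x m k = 0 := by
  have : (m - k).choose k = 0 := Nat.choose_eq_zero_of_lt (by omega)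
  simp [Bf, this]

lemma pascal (m j : ℕ) :
    (m + 1 - j).choose (j + 1) = (m - j).choose j + (m - j).choose (j + 1) := by
  rcases le_or_gt j m with h | h
  · have e : m + 1 - j = (m - j) + 1 := by omega
    rw [e, Nat.choose_succ_succ]
  · have e1 : m + 1 - j = 0 := by omega
    have e2 : m - j = 0 := by omega
    rw [e1, e2]
    simp [Nat.choose_eq_zero_of_lt (show 0 < j by omega)]

lemma hterm (x : ℚ) (m j : ℕ) :
    Bf x (m + 2) (j + 1) = (-x) * Bf x m j + (x + 1) * Bf x (m + 1) (j + 1) := by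
  have e1 : m + 2 - (j + 1) = m + 1 - j := by omega
  have e2 : m + 2 - 2 * (j + 1) = m - 2 * j := by omega
  have e3 : m + 1 - (j + 1) = m - j := by omega
  have hch : ((m + 1 - j).choose (j + 1) : ℚ)
      = ((m - j).choose j : ℚ) + ((m - j).choose (j + 1) : ℚ) := by
    exact_mod_cast congrArg (Nat.cast : ℕ → ℚ) (pascal m j)
  rcases le_or_gt (2 * j + 1) m with h | h
  · obtain ⟨a, ha⟩ : ∃ a, m - 2 * j - 1 = a := ⟨_, rfl⟩
    have e4 : m + 1 - 2 * (j + 1) = a := by omega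
    have e2' : m + 2 - 2 * (j + 1) = a + 1 := by omega
    have e5 : m - 2 * j = a + 1 := by omega
    unfold Bf
    rw [e1, e2', e3, e4, hch, e5]
    ring
  · have hc : (m - j).choose (j + 1) = 0 := Nat.choose_eq_zero_of_lt (by omega)
    unfold Bf
    rw [e1, e2, e3, hch, hc]
    push_cast
    ring

lemma B_rec (x : ℚ) (m : ℕ) :
    ∑ k ∈ range (m + 3), Bf x (m + 2) k =
      (x + 1) * ∑ k ∈ range (m + 2), Bf x (m + 1) k - x * ∑ k ∈ range (m + 1), Bf x m k := by
  rw [Finset.sum_range_succ']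
  have h0 : Bf x (m + 2) 0 = (x + 1) ^ (m + 2) := by simp [Bf]
  rw [h0]
  have : ∑ j ∈ range (m + 2), Bf x (m + 2) (j + 1)
      = ∑ j ∈ range (m + 2), ((-x) * Bf x m j + (x + 1) * Bf x (m + 1) (j + 1)) :=
    Finset.sum_congr rfl (fun j _ => hterm x m j)
  rw [this, Finset.sum_add_distrib, ← Finset.mul_sum, ← Finset.mul_sum]
  have hA : ∑ j ∈ range (m + 2), Bf x m j = ∑ j ∈ range (m + 1), Bf x m j := by
    rw [Finset.sum_range_succ, Bf_zero x m (m + 1) (by omega), add_zero]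
  have hB : ∑ j ∈ range (m + 2), Bf x (m + 1) (j + 1)
      = ∑ k ∈ range (m + 2), Bf x (m + 1) k - (x + 1) ^ (m + 1) := by
    rw [Finset.sum_range_succ, Bf_zero x (m + 1) (m + 2) (by omega), add_zero]
    rw [Finset.sum_range_succ' (fun k => Bf x (m + 1) k) (m + 1)]
    have : Bf x (m + 1) 0 = (x + 1) ^ (m + 1) := by simp [Bf]
    rw [this]
    ring
  rw [hA, hB]
  ring

lemma Bval (x : ℚ) : ∀ m, ∑ k ∈ range (m + 1), Bf x m k = ∑ j ∈ range (m + 1), x ^ j := by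
  have key : ∀ m, (∑ k ∈ range (m + 1), Bf x m k = ∑ j ∈ range (m + 1), x ^ j) ∧
      (∑ k ∈ range (m + 2), Bf x (m + 1) k = ∑ j ∈ range (m + 2), x ^ j) := by
    intro m
    induction m with
    | zero =>
      constructor
      · simp [Bf]
      · rw [Finset.sum_range_succ, Finset.sum_range_succ, Finset.sum_range_succ,
          Finset.sum_range_succ]
        simp [Bf]
        ring
    | succ n ih =>
      refine ⟨ih.2, ?_⟩
      rw [show n + 1 + 2 = n + 3 from rfl, B_rec, ih.1, ih.2]
      rw [Finset.sum_range_succ (fun j => x ^ j) (n + 2),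
        Finset.sum_range_succ (fun j => x ^ j) (n + 1)]
      ring
  exact fun m => (key m).1

lemma coeff (a b : ℕ) :
    (((a + b + 2 : ℕ) : ℚ) / (((a + b + 2 : ℕ) : ℚ) - ((b + 1 : ℕ) : ℚ))) *
        ((a + 1).choose (b + 1) : ℚ)
      = ((a + 1).choose (b + 1) : ℚ) + (a.choose b : ℚ) := by
  have hne : ((a + b + 2 : ℕ) : ℚ) - ((b + 1 : ℕ) : ℚ) ≠ 0 := by
    have : ((a + b + 2 : ℕ) : ℚ) - ((b + 1 : ℕ) : ℚ) = (a : ℚ) + 1 := by push_cast; ring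
    rw [this]; positivity
  have hid : (((a + 1) * a.choose b : ℕ) : ℚ) = (((a + 1).choose (b + 1) * (b + 1) : ℕ) : ℚ) := by
    exact_mod_cast congrArg (Nat.cast : ℕ → ℚ) (Nat.add_one_mul_choose_eq a b)
  rw [div_mul_eq_mul_div, div_eq_iff hne]
  push_cast at hid ⊢
  linear_combination -hid

theorem stmt_1 (n : ℕ) (hn : 1 ≤ n) (x : ℚ) :
    (x + 1) ^ n + ∑ k ∈ Finset.Icc 1 (n / 2),
      (-1) ^ k * ((n : ℚ) / ((n : ℚ) - (k : ℚ))) * (Nat.choose (n - k) k : ℚ) *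
        (x + 1) ^ (n - 2 * k) * x ^ k = 1 + x ^ n := by
  rcases Nat.lt_or_ge n 2 with h2 | h2
  · have hn1 : n = 1 := by omega
    subst hn1
    norm_num
    ring
  · obtain ⟨m, rfl⟩ : ∃ m, n = m + 2 := ⟨n - 2, by omega⟩
    have hstep : ∀ k ∈ Finset.Icc 1 ((m + 2) / 2),
        (-1 : ℚ) ^ k * (((m + 2 : ℕ) : ℚ) / (((m + 2 : ℕ) : ℚ) - (k : ℚ))) *
            ((m + 2 - k).choose k : ℚ) * (x + 1) ^ (m + 2 - 2 * k) * x ^ k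
        = Bf x (m + 2) k +
          (-1 : ℚ) ^ k * ((m + 2 - k - 1).choose (k - 1) : ℚ) *
            (x + 1) ^ (m + 2 - 2 * k) * x ^ k := by
      intro k hk
      simp only [Finset.mem_Icc] at hk
      obtain ⟨b, rfl⟩ : ∃ b, k = b + 1 := ⟨k - 1, by omega⟩
      have hb : b ≤ m := by omega
      obtain ⟨a, rfl⟩ : ∃ a, m = a + b := ⟨m - b, by omega⟩
      have e1 : a + b + 2 - (b + 1) = a + 1 := by omega
      have e2 : a + b + 2 - (b + 1) - 1 = a := by omega
      have e3 : b + 1 - 1 = b := rfl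
      simp only [Bf, e1, e2, e3]
      have hc := coeff a b
      push_cast at hc ⊢
      linear_combination ((-1 : ℚ) ^ (b + 1) * (x + 1) ^ (a + b + 2 - 2 * (b + 1)) * x ^ (b + 1)) * hc
    rw [Finset.sum_congr rfl hstep, Finset.sum_add_distrib]
    have hA : (x + 1) ^ (m + 2) + ∑ k ∈ Finset.Icc 1 ((m + 2) / 2), Bf x (m + 2) k
        = ∑ k ∈ Finset.range (m + 3), Bf x (m + 2) k := by
      rw [← Finset.Ico_add_one_right_eq_Icc, Finset.sum_Ico_eq_sum_range]
      have er : (m + 2) / 2 + 1 - 1 = (m + 2) / 2 := rfl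
      rw [er]
      have hsub : ∑ i ∈ Finset.range ((m + 2) / 2), Bf x (m + 2) (1 + i)
          = ∑ i ∈ Finset.range (m + 2), Bf x (m + 2) (i + 1) := by
        rw [Finset.sum_congr rfl (fun i _ => by rw [add_comm 1 i])]
        apply Finset.sum_subset (Finset.range_subset_range.mpr (by omega))
        intro i _ hi
        simp only [Finset.mem_range, not_lt] at hi
        exact Bf_zero x (m + 2) (i + 1) (by omega)
      rw [hsub, Finset.sum_range_succ' (fun k => Bf x (m + 2) k) (m + 2)]
      have h0 : Bf x (m + 2) 0 = (x + 1) ^ (m + 2) := by simp [Bf]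
      rw [h0]
      ring
    have hB : ∑ k ∈ Finset.Icc 1 ((m + 2) / 2),
        (-1 : ℚ) ^ k * ((m + 2 - k - 1).choose (k - 1) : ℚ) *
          (x + 1) ^ (m + 2 - 2 * k) * x ^ k
        = -x * ∑ k ∈ Finset.range (m + 1), Bf x m k := by
      rw [← Finset.Ico_add_one_right_eq_Icc, Finset.sum_Ico_eq_sum_range]
      have er : (m + 2) / 2 + 1 - 1 = (m + 2) / 2 := rfl
      rw [er]
      have hterm2 : ∀ i, (-1 : ℚ) ^ (1 + i) * ((m + 2 - (1 + i) - 1).choose ((1 + i) - 1) : ℚ) *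
          (x + 1) ^ (m + 2 - 2 * (1 + i)) * x ^ (1 + i) = -x * Bf x m i := by
        intro i
        have e1 : m + 2 - (1 + i) - 1 = m - i := by omega
        have e2 : (1 + i) - 1 = i := by omega
        have e3 : m + 2 - 2 * (1 + i) = m - 2 * i := by omega
        rw [e1, e2, e3]
        simp only [Bf]
        ring
      rw [Finset.sum_congr rfl (fun i _ => hterm2 i), ← Finset.mul_sum]
      congr 1
      apply Finset.sum_subset (Finset.range_subset_range.mpr (by omega))
      intro i _ hi
      simp only [Finset.mem_range, not_lt] at hi
      exact Bf_zero x m i (by omega)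
    rw [← add_assoc, hA, hB, Bval, Bval]
    rw [Finset.sum_range_succ' (fun j => x ^ j) (m + 2),
      Finset.sum_range_succ (fun i => x ^ (i + 1)) (m + 1)]
    have hx : x * ∑ j ∈ Finset.range (m + 1), x ^ j = ∑ j ∈ Finset.range (m + 1), x ^ (j + 1) := by
      rw [Finset.mul_sum]
      exact Finset.sum_congr rfl (fun j _ => by ring)
    linear_combination -hx
end

section
/- Define p_1(n,3,x,s) by p_1(0) = 3, p_1(1) = x, p_1(2) = x^2, p_1(3) = x^3 - 3s, and p_1(n+3) = x·p_1(n+2) - s·p_1(n) for n ≥ 1. Then for n ≥ 1, p_1(n,3,x,s) = ∑_{j: 3j ≤ n} (-1)^j (n/(n-2j)) C(n-2j,j) x^{n-3j} s^j. -/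
/-- The polynomials `p₁(n,3,x,s)`: `p₁(0)=3`, `p₁(1)=x`, `p₁(2)=x²`,
and `p₁(n+3) = x·p₁(n+2) - s·p₁(n)` (so in particular `p₁(3)=x³-3s`). -/
def p1three (x s : ℚ) : ℕ → ℚ
  | 0 => 3
  | 1 => x
  | 2 => x ^ 2
  | (n + 3) => x * p1three x s (n + 2) - s * p1three x s n

def G (n j : ℕ) : ℚ := (n : ℚ) / ((n : ℚ) - 2 * (j : ℚ)) * ((n - 2 * j).choose j : ℚ)

lemma choose_zero' {n j : ℕ} (h : n < 3 * j) : (n - 2 * j).choose j = 0 :=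
  Nat.choose_eq_zero_of_lt (by omega)

lemma G_zero {n j : ℕ} (h : n < 3 * j) : G n j = 0 := by
  simp [G, choose_zero' h]

lemma G_nought {n : ℕ} (hn : 1 ≤ n) : G n 0 = 1 := by
  have h : (n : ℚ) ≠ 0 := Nat.cast_ne_zero.mpr (by omega)
  simp [G, div_self h]

lemma G_rec {n j : ℕ} (hn : 1 ≤ n) (hj : 3 * j ≤ n) :
    G (n + 3) (j + 1) = G (n + 2) (j + 1) + G n j := by
  rcases eq_or_lt_of_le hj with heq | hlt
  · -- edge: 3*j = n
    subst heq
    have hj1 : 1 ≤ j := by omega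
    have hjq : (j : ℚ) ≠ 0 := Nat.cast_ne_zero.mpr (by omega)
    have hjq1 : (j : ℚ) + 1 ≠ 0 := by positivity
    have hz : G (3 * j + 2) (j + 1) = 0 := G_zero (by omega)
    rw [hz, zero_add]
    have h1 : 3 * j + 3 - 2 * (j + 1) = j + 1 := by omega
    have h2 : 3 * j - 2 * j = j := by omega
    unfold G
    rw [h1, h2, Nat.choose_self, Nat.choose_self]
    have dA : (↑(3 * j + 3) : ℚ) - 2 * ↑(j + 1) = (j : ℚ) + 1 := by push_cast; ring
    have dB : (↑(3 * j) : ℚ) - 2 * ↑j = (j : ℚ) := by push_cast; ring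
    rw [dA, dB, Nat.cast_one, mul_one, mul_one, div_eq_div_iff hjq1 hjq]
    push_cast; ring
  · -- generic
    obtain ⟨m, rfl⟩ : ∃ m, n = m + 2 * j := ⟨n - 2 * j, by omega⟩
    have hmj : j + 1 ≤ m := by omega
    have e1 : m + 2 * j + 3 - 2 * (j + 1) = m + 1 := by omega
    have e2 : m + 2 * j + 2 - 2 * (j + 1) = m := by omega
    have e3 : m + 2 * j - 2 * j = m := by omega
    unfold G
    rw [e1, e2, e3]
    have hmq : (m : ℚ) ≠ 0 := Nat.cast_ne_zero.mpr (by omega)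
    have hm1q : (m : ℚ) + 1 ≠ 0 := by positivity
    have d1 : (↑(m + 2 * j + 3) : ℚ) - 2 * (↑(j + 1) : ℚ) = (m : ℚ) + 1 := by
      push_cast; ring
    have d2 : (↑(m + 2 * j + 2) : ℚ) - 2 * (↑(j + 1) : ℚ) = (m : ℚ) := by
      push_cast; ring
    have d3 : (↑(m + 2 * j) : ℚ) - 2 * (↑j : ℚ) = (m : ℚ) := by
      push_cast; ring
    rw [d1, d2, d3, Nat.choose_succ_succ m j]
    have hid : m.choose (j + 1) * (j + 1) = m.choose j * (m - j) :=
      Nat.choose_succ_right_eq m j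
    have hid' : (m.choose (j + 1) : ℚ) * ((j : ℚ) + 1)
        = (m.choose j : ℚ) * ((m : ℚ) - (j : ℚ)) := by
      have := congrArg (Nat.cast : ℕ → ℚ) hid
      push_cast [Nat.cast_sub (by omega : j ≤ m)] at this
      linarith
    push_cast
    field_simp
    linear_combination (-2 : ℚ) * hid'

lemma step_term (x s : ℚ) {n j : ℕ} (hn : 1 ≤ n) (hj : 3 * j ≤ n) :
    (-1 : ℚ) ^ (j + 1) * G (n + 3) (j + 1) * x ^ (n + 3 - 3 * (j + 1)) * s ^ (j + 1)
      = x * ((-1 : ℚ) ^ (j + 1) * G (n + 2) (j + 1) * x ^ (n + 2 - 3 * (j + 1)) * s ^ (j + 1))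
        - s * ((-1 : ℚ) ^ j * G n j * x ^ (n - 3 * j) * s ^ j) := by
  rw [G_rec hn hj]
  have eA : n + 3 - 3 * (j + 1) = n - 3 * j := by omega
  rw [eA]
  rcases eq_or_lt_of_le hj with heq | hlt
  · -- 3*j = n
    have hz : G (n + 2) (j + 1) = 0 := G_zero (by omega)
    rw [hz]
    ring
  · have eB : n - 3 * j = (n + 2 - 3 * (j + 1)) + 1 := by omega
    rw [eB, pow_succ]
    ring

lemma sum_form (x s : ℚ) : ∀ n : ℕ, 1 ≤ n →
    p1three x s n = ∑ j ∈ Finset.range (n / 3 + 1),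
      (-1 : ℚ) ^ j * G n j * x ^ (n - 3 * j) * s ^ j := by
  intro n
  induction n using Nat.strong_induction_on with
  | _ n IH =>
    intro hn
    match n, hn with
    | 1, _ => simp [p1three, G_nought]
    | 2, _ => simp [p1three, G_nought]
    | 3, _ =>
      rw [show (3 : ℕ) / 3 + 1 = 2 from rfl, Finset.sum_range_succ, Finset.sum_range_one]
      have h1 : G 3 1 = 3 := by norm_num [G]
      rw [G_nought (by norm_num), h1]
      show x * x ^ 2 - s * 3 = _
      norm_num
      ring
    | (k + 4), _ =>
      have hk1 : 1 ≤ k + 1 := by omega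
      have IH3 := IH (k + 3) (by omega) (by omega)
      have IH1 := IH (k + 1) (by omega) hk1
      have hrec : p1three x s (k + 4) = x * p1three x s (k + 3) - s * p1three x s (k + 1) := rfl
      rw [hrec, IH3, IH1]
      -- pad the (k+3)-sum up to (k+1)/3 + 2 terms
      set M := (k + 1) / 3 + 1 with hM
      have e4 : (k + 4) / 3 + 1 = M + 1 := by omega
      have e3 : (k + 3) / 3 + 1 ≤ M + 1 := by omega
      have pad : ∑ j ∈ Finset.range ((k + 3) / 3 + 1),
            (-1 : ℚ) ^ j * G (k + 3) j * x ^ (k + 3 - 3 * j) * s ^ j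
          = ∑ j ∈ Finset.range (M + 1),
            (-1 : ℚ) ^ j * G (k + 3) j * x ^ (k + 3 - 3 * j) * s ^ j := by
        apply Finset.sum_subset
        · exact Finset.range_subset_range.mpr e3
        · intro j _ hj
          have : k + 3 < 3 * j := by
            simp only [Finset.mem_range, not_lt] at hj
            omega
          rw [G_zero this]
          ring
      rw [pad, e4, Finset.mul_sum, Finset.mul_sum]
      rw [Finset.sum_range_succ' (fun j => (-1 : ℚ) ^ j * G (k + 4) j * x ^ (k + 4 - 3 * j) * s ^ j) M]
      rw [Finset.sum_range_succ' (fun j => x * ((-1 : ℚ) ^ j * G (k + 3) j * x ^ (k + 3 - 3 * j) * s ^ j)) M]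
      have hterm : ∀ j ∈ Finset.range M,
          (-1 : ℚ) ^ (j + 1) * G (k + 4) (j + 1) * x ^ (k + 4 - 3 * (j + 1)) * s ^ (j + 1)
            = x * ((-1 : ℚ) ^ (j + 1) * G (k + 3) (j + 1) * x ^ (k + 3 - 3 * (j + 1)) * s ^ (j + 1))
              - s * ((-1 : ℚ) ^ j * G (k + 1) j * x ^ (k + 1 - 3 * j) * s ^ j) := by
        intro j hjmem
        have hj3 : 3 * j ≤ k + 1 := by
          simp only [Finset.mem_range, hM] at hjmem
          omega
        exact step_term x s hk1 hj3
      have hsum := Finset.sum_congr rfl hterm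
      rw [add_sub_right_comm, ← Finset.sum_sub_distrib, ← hsum]
      congr 1
      -- j = 0 terms
      simp only [pow_zero, Nat.mul_zero, Nat.sub_zero]
      rw [G_nought (show 1 ≤ k + 4 by omega), G_nought (show 1 ≤ k + 3 by omega)]
      rw [show k + 4 = (k + 3) + 1 from rfl, pow_succ]
      ring

theorem stmt_6 (n : ℕ) (hn : 1 ≤ n) (x s : ℚ) :
    p1three x s n = ∑ j ∈ Finset.range (n / 3 + 1),
      (-1) ^ j * ((n : ℚ) / ((n : ℚ) - 2 * (j : ℚ))) * (Nat.choose (n - 2 * j) j : ℚ) *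
        x ^ (n - 3 * j) * s ^ j := by
  rw [sum_form x s n hn]
  apply Finset.sum_congr rfl
  intro j _
  simp only [G]
  ring
end

section
/- For all n ≥ 1, ∑_{j: 3j ≤ n} (-1)^j (n/(n-2j)) C(n-2j,j) (x+1)^{n-3j} x^j − ∑_{j: 3j ≤ 2n} (n/(n-j)) C(n-j, 2n-3j) (x+1)^{2n-3j} x^j = 1 + (-1)^{n-1} x^n as polynomials in x. -/
open Finset

section Stmt11Aux

private lemma absorbQ (a k : ℕ) :
    ((k:ℚ)+1) * (Nat.choose a (k+1)) = ((a:ℚ) - k) * (Nat.choose a k) := by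
  rcases le_or_gt (k+1) a with h | h
  · have hc := congrArg (Nat.cast : ℕ → ℚ) (Nat.choose_succ_right_eq a k)
    push_cast [Nat.cast_sub (by omega : k ≤ a)] at hc
    linarith [hc]
  · rcases eq_or_lt_of_le (by omega : a ≤ k) with h2 | h2
    · simp [Nat.choose_eq_zero_of_lt (by omega : a < k+1), h2]
    · simp [Nat.choose_eq_zero_of_lt (by omega : a < k+1), Nat.choose_eq_zero_of_lt h2]

private lemma pascalQ (a k : ℕ) :
    ((Nat.choose (a+1) (k+1) : ℕ) : ℚ) = (Nat.choose a k : ℚ) + (Nat.choose a (k+1) : ℚ) := by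
  rw [Nat.choose_succ_succ]; push_cast; ring

private lemma helper1 (a j : ℕ) (ha : 1 ≤ a) :
    ((a:ℚ)+2*j+3)/((a:ℚ)+1) * (Nat.choose (a+1) (j+1)) =
      ((a:ℚ)+2*j+2)/(a:ℚ) * (Nat.choose a (j+1)) + ((a:ℚ)+2*j)/(a:ℚ) * (Nat.choose a j) := by
  have ha0 : (a:ℚ) ≠ 0 := by positivity
  have ha1 : (a:ℚ)+1 ≠ 0 := by positivity
  have hp := pascalQ a j
  have hab := absorbQ a j
  field_simp
  linear_combination ((a:ℚ)*((a:ℚ)+2*j+3)) * hp - 2 * hab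

private lemma helper2 (p t : ℕ) (hp1 : 1 ≤ p) :
    (3*(p:ℚ) - t + 2)/((p:ℚ)+1) * (Nat.choose (p+1) (t+1)) =
      (3*(p:ℚ) - t)/(p:ℚ) * (Nat.choose p t) + (3*(p:ℚ) - t - 1)/(p:ℚ) * (Nat.choose p (t+1)) := by
  have hp0 : (p:ℚ) ≠ 0 := by positivity
  have hp1' : (p:ℚ)+1 ≠ 0 := by positivity
  have hpas := pascalQ p t
  have hab := absorbQ p t
  field_simp
  linear_combination ((p:ℚ)*(3*(p:ℚ)-t+2)) * hpas + hab

private def Fq (x : ℚ) (n j : ℕ) : ℚ :=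
  (-1) ^ j * ((n : ℚ) / ((n : ℚ) - 2 * (j : ℚ))) * (Nat.choose (n - 2 * j) j : ℚ) *
    (x + 1) ^ (n - 3 * j) * x ^ j

private def Gq (x : ℚ) (n j : ℕ) : ℚ :=
  ((n : ℚ) / ((n : ℚ) - (j : ℚ))) * (Nat.choose (n - j) (2 * n - 3 * j) : ℚ) *
    (x + 1) ^ (2 * n - 3 * j) * x ^ j

private def Gq' (x : ℚ) (n j : ℕ) : ℚ := if n ≤ 2 * j ∧ 3 * j ≤ 2 * n then Gq x n j else 0

private lemma Fq_zero (x : ℚ) {n j : ℕ} (hn : 1 ≤ n) (h : n < 3 * j) : Fq x n j = 0 := by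
  unfold Fq
  rcases lt_trichotomy (2*j) n with h2 | h2 | h2
  · have : Nat.choose (n - 2*j) j = 0 := Nat.choose_eq_zero_of_lt (by omega)
    simp [this]
  · have : (n:ℚ) - 2*(j:ℚ) = 0 := by
      have : ((2*j : ℕ) : ℚ) = (n : ℚ) := by rw [h2]
      push_cast at this; linarith
    simp [this]
  · have h0 : n - 2*j = 0 := by omega
    have : Nat.choose (n - 2*j) j = 0 := by
      rw [h0]; exact Nat.choose_eq_zero_of_lt (by omega)
    simp [this]

private lemma Fq_apply_zero (x : ℚ) {n : ℕ} (hn : 1 ≤ n) : Fq x n 0 = (x+1)^n := by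
  have h : (n:ℚ) ≠ 0 := by positivity
  simp [Fq, div_self h]

private lemma Fq_rec (x : ℚ) {m : ℕ} (hm : 1 ≤ m) (j : ℕ) :
    Fq x (m+3) (j+1) = (x+1) * Fq x (m+2) (j+1) - x * Fq x m j := by
  rcases lt_trichotomy m (3*j) with hc | hc | hc
  · rw [Fq_zero x (by omega) (by omega : m+3 < 3*(j+1)),
       Fq_zero x (by omega) (by omega : m+2 < 3*(j+1)),
       Fq_zero x hm hc]
    ring
  · subst hc
    have hj : 1 ≤ j := by omega
    simp only [Fq]
    rw [show 3*j+3 - 2*(j+1) = j+1 from by omega,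
        show 3*j+3 - 3*(j+1) = 0 from by omega,
        show 3*j+2 - 2*(j+1) = j from by omega,
        show 3*j - 2*j = j from by omega,
        show 3*j - 3*j = 0 from by omega]
    rw [Nat.choose_self, Nat.choose_self, Nat.choose_succ_self]
    have hj0 : (j:ℚ) ≠ 0 := by positivity
    have hj1 : (j:ℚ)+1 ≠ 0 := by positivity
    push_cast
    have e1 : (j:ℚ) * ((j:ℚ))⁻¹ = 1 := mul_inv_cancel₀ hj0
    have e2 : ((j:ℚ)+1) * ((j:ℚ)+1)⁻¹ = 1 := mul_inv_cancel₀ hj1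
    linear_combination (3*(-1:ℚ)^(j+1)*x^(j+1)) * e2 - (3*(-1:ℚ)^(j+1)*x^(j+1)) * e1
  · obtain ⟨e, rfl⟩ : ∃ e, m = 3*j+1+e := ⟨m - (3*j+1), by omega⟩
    simp only [Fq]
    rw [show 3*j+1+e+3 - 2*(j+1) = (j+e+1)+1 from by omega,
        show 3*j+1+e+3 - 3*(j+1) = e+1 from by omega,
        show 3*j+1+e+2 - 2*(j+1) = j+e+1 from by omega,
        show 3*j+1+e+2 - 3*(j+1) = e from by omega,
        show 3*j+1+e - 2*j = j+e+1 from by omega,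
        show 3*j+1+e - 3*j = e+1 from by omega]
    have H := helper1 (j+e+1) j (by omega)
    push_cast at H ⊢
    linear_combination ((-1:ℚ)^(j+1) * (x+1)^(e+1) * x^(j+1)) * H

private lemma Gq'_rec (x : ℚ) {n : ℕ} (hn : 1 ≤ n) (j : ℕ) :
    Gq' x (n+3) (j+2) = x*(x+1) * Gq' x (n+1) (j+1) + x^2 * Gq' x n j := by
  by_cases hL : n ≤ 2*j+1 ∧ 3*j ≤ 2*n
  · rcases (by omega : n = 2*j+1 ∨ 3*j = 2*n ∨ (n ≤ 2*j ∧ 3*j+1 ≤ 2*n)) with hc | hc | hc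
    · subst hc
      unfold Gq'
      rw [if_pos (by omega), if_pos (by omega), if_neg (by omega)]
      unfold Gq
      rw [show 2*j+1+3 - (j+2) = j+2 from by omega,
          show 2*(2*j+1+3) - 3*(j+2) = j+2 from by omega,
          show 2*j+1+1 - (j+1) = j+1 from by omega,
          show 2*(2*j+1+1) - 3*(j+1) = j+1 from by omega,
          Nat.choose_self, Nat.choose_self]
      have E1 : ((j:ℚ)+1) * ((j:ℚ)+1)⁻¹ = 1 := mul_inv_cancel₀ (by positivity)
      have E2 : ((j:ℚ)+2) * ((j:ℚ)+2)⁻¹ = 1 := mul_inv_cancel₀ (by positivity)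
      push_cast
      linear_combination (2*(x+1)^(j+2)*x^(j+2)) * E2 - (2*(x+1)^(j+2)*x^(j+2)) * E1
    · obtain ⟨d, rfl, rfl⟩ : ∃ d, n = 3*d ∧ j = 2*d := ⟨n/3, by omega, by omega⟩
      have hd : 1 ≤ d := by omega
      unfold Gq'
      rw [if_pos (by omega), if_neg (by omega), if_pos (by omega)]
      unfold Gq
      rw [show 3*d+3 - (2*d+2) = d+1 from by omega,
          show 2*(3*d+3) - 3*(2*d+2) = 0 from by omega,
          show 3*d - 2*d = d from by omega,
          show 2*(3*d) - 3*(2*d) = 0 from by omega,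
          Nat.choose_zero_right, Nat.choose_zero_right]
      have E1 : ((d:ℚ)) * ((d:ℚ))⁻¹ = 1 := mul_inv_cancel₀ (by positivity)
      have E2 : ((d:ℚ)+1) * ((d:ℚ)+1)⁻¹ = 1 := mul_inv_cancel₀ (by positivity)
      push_cast
      linear_combination (3*x^(2*d+2)) * E2 - (3*x^(2*d+2)) * E1
    · obtain ⟨hR, hM⟩ := hc
      obtain ⟨p, t, hp, hnpt, hjpt⟩ :
          ∃ p t, 1 ≤ p ∧ n + t + 1 = 3*p ∧ j + t + 1 = 2*p :=
        ⟨n - j, 2*n - 3*j - 1, by omega, by omega, by omega⟩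
      unfold Gq'
      rw [if_pos (by omega), if_pos (by omega), if_pos (by omega)]
      unfold Gq
      rw [show n+3 - (j+2) = p+1 from by omega,
          show 2*(n+3) - 3*(j+2) = t+1 from by omega,
          show n+1 - (j+1) = p from by omega,
          show 2*(n+1) - 3*(j+1) = t from by omega,
          show n - j = p from by omega,
          show 2*n - 3*j = t+1 from by omega]
      have hnq : (n:ℚ) = 3*(p:ℚ) - (t:ℚ) - 1 := by
        have : ((n + t + 1 : ℕ) : ℚ) = ((3*p : ℕ) : ℚ) := by rw [hnpt]
        push_cast at this; linarith
      have hjq : (j:ℚ) = 2*(p:ℚ) - (t:ℚ) - 1 := by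
        have : ((j + t + 1 : ℕ) : ℚ) = ((2*p : ℕ) : ℚ) := by rw [hjpt]
        push_cast at this; linarith
      have H := helper2 p t hp
      push_cast [hnq, hjq]
      linear_combination ((x+1)^(t+1) * x^(j+2)) * H
  · unfold Gq'
    rw [if_neg (by omega), if_neg (by omega), if_neg (by omega)]
    ring

private def S1 (x : ℚ) (n : ℕ) : ℚ := ∑ j ∈ range (n+1), Fq x n j
private def S2 (x : ℚ) (n : ℕ) : ℚ := ∑ j ∈ range (n+1), Gq' x n j

private lemma S1_rec (x : ℚ) {m : ℕ} (hm : 1 ≤ m) :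
    S1 x (m+3) = (x+1) * S1 x (m+2) - x * S1 x m := by
  have A : ∑ j ∈ range (m+3+1), Fq x (m+2) j = ∑ j ∈ range (m+2+1), Fq x (m+2) j := by
    rw [show m+3+1 = (m+2+1)+1 from rfl, Finset.sum_range_succ,
      Fq_zero x (by omega) (by omega : m+2 < 3*(m+2+1))]
    ring
  have B : ∑ j ∈ range (m+3), Fq x m j = ∑ j ∈ range (m+1), Fq x m j := by
    rw [show m+3 = ((m+1)+1)+1 from rfl, Finset.sum_range_succ, Finset.sum_range_succ,
      Fq_zero x hm (by omega : m < 3*(m+1+1)), Fq_zero x hm (by omega : m < 3*(m+1))]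
    ring
  unfold S1
  rw [show m+3+1 = (m+3)+1 from rfl, Finset.sum_range_succ' (Fq x (m+3)) (m+3)]
  rw [Finset.sum_congr rfl (fun j _ => Fq_rec x hm j)]
  rw [Finset.sum_sub_distrib, ← Finset.mul_sum, ← Finset.mul_sum,
    Fq_apply_zero x (show 1 ≤ m+3 by omega)]
  have C : (∑ j ∈ range (m+3), Fq x (m+2) (j+1)) =
      (∑ j ∈ range (m+3+1), Fq x (m+2) j) - Fq x (m+2) 0 := by
    rw [Finset.sum_range_succ' (Fq x (m+2)) (m+3)]; ring
  rw [C, A, B, Fq_apply_zero x (show 1 ≤ m+2 by omega)]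
  ring

private lemma S2_rec (x : ℚ) {n : ℕ} (hn : 1 ≤ n) :
    S2 x (n+3) = x*(x+1) * S2 x (n+1) + x^2 * S2 x n := by
  have z0 : Gq' x (n+3) 0 = 0 := by unfold Gq'; rw [if_neg (by omega)]
  have z1 : Gq' x (n+3) 1 = 0 := by unfold Gq'; rw [if_neg (by omega)]
  have z2 : Gq' x (n+1) 0 = 0 := by unfold Gq'; rw [if_neg (by omega)]
  have z3 : Gq' x (n+1) (n+2) = 0 := by unfold Gq'; rw [if_neg (by omega)]
  have z4 : Gq' x n (n+1) = 0 := by unfold Gq'; rw [if_neg (by omega)]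
  have A : ∑ j ∈ range (n+2+1), Gq' x (n+1) j = ∑ j ∈ range (n+1+1), Gq' x (n+1) j := by
    rw [show n+2+1 = (n+1+1)+1 from rfl, Finset.sum_range_succ, z3]
    ring
  have B : ∑ j ∈ range (n+2), Gq' x n j = ∑ j ∈ range (n+1), Gq' x n j := by
    rw [show n+2 = (n+1)+1 from rfl, Finset.sum_range_succ, z4]
    ring
  unfold S2
  rw [show n+3+1 = (n+3)+1 from rfl, Finset.sum_range_succ' (Gq' x (n+3)) (n+3),
    show n+3 = (n+2)+1 from rfl, Finset.sum_range_succ' (fun j => Gq' x (n+3) (j+1)) (n+2)]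
  rw [Finset.sum_congr rfl (fun j _ => Gq'_rec x hn j)]
  rw [Finset.sum_add_distrib, ← Finset.mul_sum, ← Finset.mul_sum, z0, z1]
  have C : (∑ j ∈ range (n+2), Gq' x (n+1) (j+1)) =
      (∑ j ∈ range (n+2+1), Gq' x (n+1) j) - Gq' x (n+1) 0 := by
    rw [Finset.sum_range_succ' (Gq' x (n+1)) (n+2)]; ring
  rw [C, A, B, z2]
  ring

private def Lseq (x : ℚ) : ℕ → ℚ
  | 0 => 2
  | 1 => x
  | (n+2) => x * Lseq x (n+1) + x * Lseq x n

private lemma closed (x : ℚ) : ∀ n : ℕ,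
    (S1 x (n+1) = 1 + Lseq x (n+1) ∧ S2 x (n+1) = Lseq x (n+1) + (-x)^(n+1)) ∧
    (S1 x (n+2) = 1 + Lseq x (n+2) ∧ S2 x (n+2) = Lseq x (n+2) + (-x)^(n+2)) ∧
    (S1 x (n+3) = 1 + Lseq x (n+3) ∧ S2 x (n+3) = Lseq x (n+3) + (-x)^(n+3)) := by
  intro n
  induction n with
  | zero =>
    refine ⟨⟨?_, ?_⟩, ⟨?_, ?_⟩, ⟨?_, ?_⟩⟩ <;>
      norm_num [S1, S2, Fq, Gq, Gq', Lseq, Finset.sum_range_succ] <;> ring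
  | succ k ih =>
    refine ⟨ih.2.1, ih.2.2, ?_, ?_⟩
    · have h1 := S1_rec x (show 1 ≤ k+1 by omega)
      rw [show k+1+3 = (k+1)+3 from rfl] at h1 ⊢
      rw [h1, ih.2.2.1, ih.1.1]
      simp only [show (k+1)+3 = (k+2)+2 from rfl, show (k+1)+2 = (k+1)+2 from rfl, Lseq]
      ring
    · have h2 := S2_rec x (show 1 ≤ k+1 by omega)
      rw [h2, ih.2.1.2, ih.1.2]
      simp only [show (k+1)+3 = (k+2)+2 from rfl, Lseq]
      ring

end Stmt11Aux

theorem stmt_11 (n : ℕ) (hn : 1 ≤ n) (x : ℚ) :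
    (∑ j ∈ Finset.range (n / 3 + 1),
        (-1) ^ j * ((n : ℚ) / ((n : ℚ) - 2 * (j : ℚ))) * (Nat.choose (n - 2 * j) j : ℚ) *
          (x + 1) ^ (n - 3 * j) * x ^ j)
    - (∑ j ∈ (Finset.range (2 * n / 3 + 1)).filter (fun j => n ≤ 2 * j),
        ((n : ℚ) / ((n : ℚ) - (j : ℚ))) * (Nat.choose (n - j) (2 * n - 3 * j) : ℚ) *
          (x + 1) ^ (2 * n - 3 * j) * x ^ j)
    = 1 + (-1) ^ (n - 1) * x ^ n := by
  have hs1 : (∑ j ∈ Finset.range (n / 3 + 1),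
      (-1) ^ j * ((n : ℚ) / ((n : ℚ) - 2 * (j : ℚ))) * (Nat.choose (n - 2 * j) j : ℚ) *
        (x + 1) ^ (n - 3 * j) * x ^ j) = S1 x n := by
    show (∑ j ∈ Finset.range (n / 3 + 1), Fq x n j) = S1 x n
    unfold S1
    refine Finset.sum_subset ?_ ?_
    · intro j hj
      simp only [Finset.mem_range] at hj ⊢
      omega
    · intro j hj hnj
      simp only [Finset.mem_range] at hj hnj
      exact Fq_zero x hn (by omega)
  have hs2 : (∑ j ∈ (Finset.range (2 * n / 3 + 1)).filter (fun j => n ≤ 2 * j),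
      ((n : ℚ) / ((n : ℚ) - (j : ℚ))) * (Nat.choose (n - j) (2 * n - 3 * j) : ℚ) *
        (x + 1) ^ (2 * n - 3 * j) * x ^ j) = S2 x n := by
    show (∑ j ∈ (Finset.range (2 * n / 3 + 1)).filter (fun j => n ≤ 2 * j), Gq x n j) = S2 x n
    rw [Finset.sum_filter]
    unfold S2
    rw [show (∑ j ∈ Finset.range (2*n/3 + 1), if n ≤ 2 * j then Gq x n j else 0)
        = ∑ j ∈ Finset.range (2*n/3 + 1), Gq' x n j from
      Finset.sum_congr rfl (fun j hj => by
        simp only [Finset.mem_range] at hj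
        unfold Gq'
        by_cases h : n ≤ 2*j
        · rw [if_pos h, if_pos ⟨h, by omega⟩]
        · rw [if_neg h, if_neg (by tauto)])]
    refine Finset.sum_subset ?_ ?_
    · intro j hj
      simp only [Finset.mem_range] at hj ⊢
      omega
    · intro j hj hnj
      simp only [Finset.mem_range] at hj hnj
      unfold Gq'
      rw [if_neg (by omega)]
  rw [hs1, hs2]
  obtain ⟨k, rfl⟩ : ∃ k, n = k+1 := ⟨n-1, by omega⟩
  rw [(closed x k).1.1, (closed x k).1.2]
  simp only [Nat.add_sub_cancel]
  rw [neg_pow, pow_succ]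
  ring
end

section
/- Let u(1),...,u(m) be the roots of z^m − x z^{m-1} + s (i.e., 1 − x z + s z^m = ∏_{j=1}^m (1 − u(j) z)), and let ω be a primitive n-th root of unity. Then 1 − ∏_{j=0}^{n-1}(1 − ω^j x + ω^{mj} s) = 1 − ∏_{k=1}^m (1 − u(k)^n). -/
open Polynomial in

lemma aux_prod (n : ℕ) (hn : 1 ≤ n) (ω : ℂ) (hω : IsPrimitiveRoot ω n) (a : ℂ) :
    ∏ j ∈ Finset.range n, (1 - a * ω ^ j) = 1 - a ^ n := by
  have h := X_pow_sub_C_eq_prod hω (α := a) (a := a ^ n) hn rfl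
  have := congrArg (Polynomial.eval 1) h
  simpa [Polynomial.eval_prod, mul_comm] using this.symm

theorem stmt_16 (n m : ℕ) (hn : 1 ≤ n) (hm : 1 ≤ m) (x s : ℂ) (u : ℕ → ℂ)
    (hu : ∀ z : ℂ, 1 - x * z + s * z ^ m = ∏ j ∈ Finset.Icc 1 m, (1 - u j * z))
    (ω : ℂ) (hω : IsPrimitiveRoot ω n) :
    1 - ∏ j ∈ Finset.range n, (1 - ω ^ j * x + ω ^ (m * j) * s)
      = 1 - ∏ k ∈ Finset.Icc 1 m, (1 - (u k) ^ n) := by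
  congr 1
  calc ∏ j ∈ Finset.range n, (1 - ω ^ j * x + ω ^ (m * j) * s)
      = ∏ j ∈ Finset.range n, ∏ k ∈ Finset.Icc 1 m, (1 - u k * ω ^ j) := by
        refine Finset.prod_congr rfl fun j _ => ?_
        rw [← hu (ω ^ j)]
        ring_nf
    _ = ∏ k ∈ Finset.Icc 1 m, ∏ j ∈ Finset.range n, (1 - u k * ω ^ j) :=
        Finset.prod_comm
    _ = ∏ k ∈ Finset.Icc 1 m, (1 - (u k) ^ n) := by
        exact Finset.prod_congr rfl fun k _ => aux_prod n hn ω hω (u k)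
end

section
/- Define p_1(n,m,x,s) as the sequence satisfying p_1(n) = x^n for 1 ≤ n < m, p_1(m) = x^m − m s, and p_1(n) = x·p_1(n−1) − s·p_1(n−m) for n > m. Then p_1(n,m,x,s) = ∑_{j=0}^{⌊n/m⌋} (-1)^j (n/(n−(m−1)j)) C(n−(m−1)j, j) x^{n−mj} s^j for all n ≥ 1. -/
lemma key18 (m j k : ℕ) (hj : 1 ≤ j) (hjk : j ≤ k) (hk2 : 2 ≤ k) :
    ((k : ℚ) + ((m : ℚ) - 1) * j) / k * (k.choose j) =
      ((k : ℚ) + ((m : ℚ) - 1) * j - 1) / ((k : ℚ) - 1) * ((k - 1).choose j)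
        + ((k : ℚ) + ((m : ℚ) - 1) * j - m) / ((k : ℚ) - 1) * ((k - 1).choose (j - 1)) := by
  have hch : ((k - 1).choose j : ℚ) * j = ((k - 1).choose (j - 1) : ℚ) * ((k : ℚ) - j) := by
    have := Nat.choose_succ_right_eq (k - 1) (j - 1)
    rw [show j - 1 + 1 = j by omega] at this
    have h2 : (k - 1) - (j - 1) = k - j := by omega
    rw [h2] at this
    have := congrArg (Nat.cast : ℕ → ℚ) this
    push_cast [Nat.cast_sub hjk] at this
    linarith [this]
  have hpas : (k.choose j : ℚ) = ((k - 1).choose (j - 1) : ℚ) + ((k - 1).choose j : ℚ) := by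
    have : k.choose j = (k - 1).choose (j - 1) + (k - 1).choose j := by
      rw [show k = (k - 1) + 1 by omega, show j = (j - 1) + 1 by omega]
      simp [Nat.choose_succ_succ]
    exact_mod_cast congrArg (Nat.cast : ℕ → ℚ) this
  have hk0 : (k : ℚ) ≠ 0 := by positivity
  have hk1 : (k : ℚ) - 1 ≠ 0 := by
    have : (2 : ℚ) ≤ k := by exact_mod_cast hk2
    linarith
  field_simp
  rw [hpas]
  ring_nf
  nlinarith [hch]

lemma term18 (m n j : ℕ) (x s : ℚ) (hm : 2 ≤ m) (hgt : m < n) (hj : 1 ≤ j) (hjn : m * j ≤ n) :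
    (-1:ℚ)^j * (((n:ℚ) - 1)/((n:ℚ) - 1 - ((m:ℚ)-1) * (j:ℚ))) * ((n - 1 - (m-1)*j).choose j : ℚ) * x^(n - m*j) * s^j
    - (-1:ℚ)^(j-1) * (((n:ℚ) - (m:ℚ))/((n:ℚ) - (m:ℚ) - ((m:ℚ)-1)*((j:ℚ) - 1))) * ((n - m - (m-1)*(j-1)).choose (j-1) : ℚ) * x^(n-m*j) * s^j
    = (-1:ℚ)^j * ((n:ℚ)/((n:ℚ) - ((m:ℚ)-1) * (j:ℚ))) * ((n - (m-1)*j).choose j : ℚ) * x^(n-m*j) * s^j := by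
  obtain ⟨i, rfl⟩ : ∃ i, j = i + 1 := ⟨j - 1, by omega⟩
  rw [Nat.add_sub_cancel]
  have e1 : (m-1)*(i+1) = (m-1)*i + (m-1) := Nat.mul_succ _ _
  have e2 : (m-1)*(i+1) = m*(i+1) - (i+1) := by rw [Nat.sub_mul, one_mul]
  have e4 : 2*(i+1) ≤ m*(i+1) := Nat.mul_le_mul_right _ (by omega)
  have e5 : i = 0 → m*(i+1) = m := by rintro rfl; simp
  have main : ∀ P Q R : ℕ, P = Q + (m-1) → P = R - (i+1) → 2*(i+1) ≤ R → R ≤ n → (i = 0 → R = m) →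
      (i + 1 ≤ n - P ∧ 2 ≤ n - P ∧ n - 1 - P = (n - P) - 1 ∧ n - m - Q = (n - P) - 1 ∧ n = (n - P) + P) := by
    intro P Q R h1 h2 h3 h4 h5
    omega
  obtain ⟨f1, f2, f3, f4, f5⟩ := main ((m-1)*(i+1)) ((m-1)*i) (m*(i+1)) e1 e2 e4 hjn e5
  set K := n - (m-1)*(i+1) with hK
  have hone : 1 ≤ m := by omega
  have hnK : (n:ℚ) = (K:ℚ) + ((m:ℚ)-1)*((i:ℚ)+1) := by
    have := congrArg (Nat.cast : ℕ → ℚ) f5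
    push_cast [Nat.cast_sub hone] at this
    linarith [this]
  have d1 : (n:ℚ) - ((m:ℚ)-1)*((i+1:ℕ):ℚ) = (K:ℚ) := by push_cast; linear_combination hnK
  have d2 : (n:ℚ) - 1 - ((m:ℚ)-1)*((i+1:ℕ):ℚ) = (K:ℚ) - 1 := by push_cast; linear_combination hnK
  have d3 : (n:ℚ) - (m:ℚ) - ((m:ℚ)-1)*((i:ℚ)) = (K:ℚ) - 1 := by push_cast; linear_combination hnK
  rw [f3, f4, d2]
  rw [show (n:ℚ) - (m:ℚ) - ((m:ℚ)-1)*(((i+1:ℕ):ℚ) - 1) = (K:ℚ) - 1 from by push_cast; linear_combination hnK]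
  rw [d1]
  have hkey := key18 m (i+1) K (by omega) f1 f2
  rw [Nat.add_sub_cancel] at hkey
  rw [hnK]
  push_cast
  push_cast at hkey
  linear_combination ((-1:ℚ))^i * x^(n - m*(i+1)) * s^(i+1) * hkey

theorem stmt_18 (m : ℕ) (hm : 2 ≤ m) (x s : ℚ) (p : ℕ → ℚ)
    (hinit : ∀ n : ℕ, 1 ≤ n → n < m → p n = x ^ n)
    (hm' : p m = x ^ m - m * s)
    (hrec : ∀ n : ℕ, m < n → p n = x * p (n - 1) - s * p (n - m)) :
    ∀ n : ℕ, 1 ≤ n →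
      p n = ∑ j ∈ Finset.range (n / m + 1),
        (-1) ^ j * ((n : ℚ) / ((n : ℚ) - (m - 1 : ℚ) * (j : ℚ))) *
          (Nat.choose (n - (m - 1) * j) j : ℚ) * x ^ (n - m * j) * s ^ j := by
  intro n
  induction n using Nat.strong_induction_on with
  | _ n ih =>
  intro hn
  rcases lt_trichotomy n m with hlt | heq | hgt
  · -- case n < m
    rw [Nat.div_eq_of_lt hlt, Finset.sum_range_one]
    have hn0 : (n : ℚ) ≠ 0 := by
      have : (1 : ℚ) ≤ n := by exact_mod_cast hn
      linarith
    simp [hinit n hn hlt, div_self hn0]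
  · -- case n = m
    subst heq
    rw [Nat.div_self (by omega : 0 < n), Finset.sum_range_succ, Finset.sum_range_one]
    have h1 : n - (n - 1) * 1 = 1 := by omega
    have h2 : n - n * 1 = 0 := by omega
    have hn0 : (n : ℚ) ≠ 0 := by
      have : (1 : ℚ) ≤ n := by exact_mod_cast hn
      linarith
    rw [h1, h2]
    simp [hm', div_self hn0]
    ring
  · -- case m < n
    have hA := ih (n-1) (by omega) (by omega)
    have hB := ih (n-m) (by omega) (by omega)
    rw [hrec n hgt, hA, hB, Finset.mul_sum, Finset.mul_sum]
    have hd : n / m = (n - m) / m + 1 := by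
      conv_lhs => rw [show n = n - m + m from by omega]
      rw [Nat.add_div_right _ (by omega : 0 < m)]
    -- Step A: convert x-side terms
    have eA : ∑ i ∈ Finset.range ((n - 1) / m + 1),
        x * ((-1) ^ i * (↑(n - 1) / (↑(n - 1) - ((m:ℚ) - 1) * ↑i)) * ↑((n - 1 - (m - 1) * i).choose i)
          * x ^ (n - 1 - m * i) * s ^ i)
        = ∑ i ∈ Finset.range (n / m + 1),
        (-1) ^ i * (((n:ℚ) - 1) / ((n:ℚ) - 1 - ((m:ℚ) - 1) * ↑i)) * ↑((n - 1 - (m - 1) * i).choose i)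
          * x ^ (n - m * i) * s ^ i := by
      rw [Finset.sum_congr rfl (fun i hi => ?_)]
      · apply Finset.sum_subset
        · refine Finset.range_subset_range.mpr ?_
          have := Nat.div_le_div_right (c := m) (show n - 1 ≤ n by omega)
          omega
        · intro i hi hni
          simp only [Finset.mem_range] at hi hni
          have h1 : i * m ≤ n := (Nat.le_div_iff_mul_le (show 0 < m by omega)).mp (by omega)
          have h2 : n - 1 < i * m := (Nat.div_lt_iff_lt_mul (by omega)).mp (by omega)
          have h3 : (m - 1) * i = m * i - i := by rw [Nat.sub_mul, one_mul]
          have h4 : m * i = i * m := Nat.mul_comm m i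
          have h5 : (n - 1 - (m - 1) * i).choose i = 0 := by
            apply Nat.choose_eq_zero_of_lt
            have hi0 : i ≠ 0 := by rintro rfl; simp at h2
            rw [h3, h4]
            generalize hA : i * m = a at h1 h2 ⊢
            omega
          rw [h5]
          simp
      · simp only [Finset.mem_range] at hi
        have h1 : m * i ≤ n - 1 := by
          have h := (Nat.le_div_iff_mul_le (show 0 < m by omega)).mp (show i ≤ (n-1)/m by omega)
          rwa [Nat.mul_comm i m] at h
        rw [Nat.cast_sub (show 1 ≤ n by omega), Nat.cast_one,
          show n - m * i = (n - 1 - m * i) + 1 from by omega, pow_succ']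
        ring
    have eB : ∑ i ∈ Finset.range ((n - m) / m + 1),
        s * ((-1) ^ i * (↑(n - m) / (↑(n - m) - ((m:ℚ) - 1) * ↑i)) * ↑((n - m - (m - 1) * i).choose i)
          * x ^ (n - m - m * i) * s ^ i)
        = ∑ i ∈ Finset.range ((n - m) / m + 1),
        (-1) ^ i * (((n:ℚ) - m) / ((n:ℚ) - m - ((m:ℚ) - 1) * ↑i)) * ↑((n - m - (m - 1) * i).choose i)
          * x ^ (n - m * (i + 1)) * s ^ (i + 1) := by
      refine Finset.sum_congr rfl (fun i hi => ?_)
      rw [Nat.cast_sub (show m ≤ n by omega),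
        show n - m * (i + 1) = n - m - m * i from by rw [Nat.mul_succ, Nat.sub_sub, Nat.add_comm],
        pow_succ]
      ring
    rw [eA, eB, ← hd]
    rw [Finset.sum_range_succ', Finset.sum_range_succ']
    have key_sum : ∑ i ∈ Finset.range (n / m),
        ((-1:ℚ) ^ (i + 1) * (((n:ℚ) - 1) / ((n:ℚ) - 1 - ((m:ℚ) - 1) * ↑(i + 1))) * ↑((n - 1 - (m - 1) * (i + 1)).choose (i + 1)) * x ^ (n - m * (i + 1)) * s ^ (i + 1)
          - (-1:ℚ) ^ i * (((n:ℚ) - (m:ℚ)) / ((n:ℚ) - (m:ℚ) - ((m:ℚ) - 1) * ↑i)) * ↑((n - m - (m - 1) * i).choose i) * x ^ (n - m * (i + 1)) * s ^ (i + 1))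
        = ∑ i ∈ Finset.range (n / m),
        (-1:ℚ) ^ (i + 1) * ((n:ℚ) / ((n:ℚ) - ((m:ℚ) - 1) * ↑(i + 1))) * ↑((n - (m - 1) * (i + 1)).choose (i + 1)) * x ^ (n - m * (i + 1)) * s ^ (i + 1) := by
      refine Finset.sum_congr rfl (fun i hi => ?_)
      simp only [Finset.mem_range] at hi
      have hmn' : m * (i + 1) ≤ n := by
        have h := (Nat.le_div_iff_mul_le (show 0 < m by omega)).mp (show i + 1 ≤ n / m by omega)
        rwa [Nat.mul_comm] at h
      have h := term18 m n (i + 1) x s hm hgt (by omega) hmn'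
      rw [Nat.add_sub_cancel] at h
      push_cast at h ⊢
      linear_combination h
    rw [Finset.sum_sub_distrib] at key_sum
    have hz0 : (n:ℚ) ≠ 0 := by
      have : (1:ℚ) ≤ n := by exact_mod_cast hn
      linarith
    have hz1 : (n:ℚ) - 1 ≠ 0 := by
      have : (3:ℚ) ≤ n := by exact_mod_cast (show 3 ≤ n by omega)
      linarith
    have e0 : (-1:ℚ) ^ 0 * (((n:ℚ) - 1) / ((n:ℚ) - 1 - ((m:ℚ) - 1) * ((0:ℕ):ℚ))) * ↑((n - 1 - (m - 1) * 0).choose 0) * x ^ (n - m * 0) * s ^ 0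
        = (-1:ℚ) ^ 0 * ((n:ℚ) / ((n:ℚ) - ((m:ℚ) - 1) * ((0:ℕ):ℚ))) * ↑((n - (m - 1) * 0).choose 0) * x ^ (n - m * 0) * s ^ 0 := by
      simp [div_self hz1, div_self hz0]
    linarith [key_sum, e0]
end

section
/- For all n ≥ 0, the Fibonacci number F_{n+1} equals ∑_{h ∈ ℤ} (-1)^h C(n, ⌊(n+5h)/2⌋), where C(n,k) = 0 for k < 0 or k > n (so the sum is finite). Similarly F_n = ∑_{h ∈ ℤ} (-1)^h C(n, ⌊(n+5h+2)/2⌋). -/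
open Finset

section SchurAux

/-- weight for the first Schur sum -/
def Wq (m : ℤ) : ℚ :=
  if m % 10 = 0 ∨ m % 10 = 9 then 1 else if m % 10 = 4 ∨ m % 10 = 5 then -1 else 0

/-- weight for the second Schur sum -/
def Wq' (m : ℤ) : ℚ :=
  if m % 10 = 1 ∨ m % 10 = 2 then 1 else if m % 10 = 6 ∨ m % 10 = 7 then -1 else 0

lemma Wq_shift (a b : ℤ) : Wq (a + 10 * b) = Wq a := by
  unfold Wq; rw [show (a + 10 * b) % 10 = a % 10 by omega]

lemma Wq'_shift (a b : ℤ) : Wq' (a + 10 * b) = Wq' a := by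
  unfold Wq'; rw [show (a + 10 * b) % 10 = a % 10 by omega]

lemma PW1 (m : ℤ) : Wq (m - 1) + Wq (m + 1) = Wq (-m) + Wq' (-m) := by
  obtain ⟨r, hr0, hr1, hm⟩ : ∃ r, 0 ≤ r ∧ r < 10 ∧ m % 10 = r := ⟨m % 10, by omega, by omega, rfl⟩
  have h1 : m - 1 = (r - 1) + 10 * (m / 10) := by omega
  have h2 : m + 1 = (r + 1) + 10 * (m / 10) := by omega
  have h3 : -m = (-r) + 10 * (-(m / 10)) := by omega
  rw [h1, h2, h3, Wq_shift, Wq_shift, Wq_shift, Wq'_shift]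
  interval_cases r <;> norm_num [Wq, Wq']

lemma PW2 (m : ℤ) :
    (Wq' (m - 1) + Wq' (m + 1)) + (Wq' (-m - 1) + Wq' (-m + 1)) = Wq m + Wq (-m) := by
  obtain ⟨r, hr0, hr1, hm⟩ : ∃ r, 0 ≤ r ∧ r < 10 ∧ m % 10 = r := ⟨m % 10, by omega, by omega, rfl⟩
  have h1 : m - 1 = (r - 1) + 10 * (m / 10) := by omega
  have h2 : m + 1 = (r + 1) + 10 * (m / 10) := by omega
  have h3 : -m - 1 = (-r - 1) + 10 * (-(m / 10)) := by omega
  have h4 : -m + 1 = (-r + 1) + 10 * (-(m / 10)) := by omega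
  have h5 : m = r + 10 * (m / 10) := by omega
  have h6 : -m = (-r) + 10 * (-(m / 10)) := by omega
  rw [h1, h2, h3, h4, Wq'_shift, Wq'_shift, Wq'_shift, Wq'_shift]
  rw [show Wq m = Wq (r + 10 * (m / 10)) from by rw [← h5],
      show Wq (-m) = Wq (-r + 10 * (-(m / 10))) from by rw [← h6],
      Wq_shift, Wq_shift]
  interval_cases r <;> norm_num [Wq, Wq']

def Sq (n : ℕ) : ℚ := ∑ k ∈ range (n + 1), Wq (2 * (k : ℤ) - n) * n.choose k
def Tq (n : ℕ) : ℚ := ∑ k ∈ range (n + 1), Wq' (2 * (k : ℤ) - n) * n.choose k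

lemma sym_sum (f : ℤ → ℚ) (n : ℕ) :
    ∑ k ∈ range (n + 1), f (2 * (k : ℤ) - n) * n.choose k
      = ∑ k ∈ range (n + 1), f ((n : ℤ) - 2 * k) * n.choose k := by
  rw [← Finset.sum_range_reflect (fun k => f (2 * (k : ℤ) - n) * n.choose k) (n + 1)]
  refine Finset.sum_congr rfl fun k hk => ?_
  rw [Finset.mem_range] at hk
  have hk' : k ≤ n := by omega
  rw [show n + 1 - 1 - k = n - k from by omega, Nat.choose_symm hk']
  have : 2 * ((n - k : ℕ) : ℤ) - n = (n : ℤ) - 2 * k := by omega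
  rw [this]

lemma pascal_step (f : ℤ → ℚ) (n : ℕ) :
    ∑ k ∈ range (n + 2), f (2 * (k : ℤ) - ((n : ℤ) + 1)) * (n + 1).choose k
      = ∑ k ∈ range (n + 1), (f (2 * (k : ℤ) - n - 1) + f (2 * (k : ℤ) - n + 1)) * n.choose k := by
  have step1 : ∑ k ∈ range (n + 2), f (2 * (k : ℤ) - ((n : ℤ) + 1)) * (n + 1).choose k
      = (∑ i ∈ range (n + 1), (f (2 * (i : ℤ) - n + 1) * (n.choose i : ℚ)
          + f (2 * (i : ℤ) - n + 1) * (n.choose (i + 1) : ℚ)))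
        + f (-(n : ℤ) - 1) := by
    rw [Finset.sum_range_succ' (fun k => f (2 * (k : ℤ) - ((n : ℤ) + 1)) * ((n + 1).choose k : ℚ)) (n + 1)]
    congr 1
    · refine Finset.sum_congr rfl fun i _ => ?_
      rw [Nat.choose_succ_succ']
      rw [show 2 * ((i + 1 : ℕ) : ℤ) - ((n : ℤ) + 1) = 2 * (i : ℤ) - n + 1 from by push_cast; ring]
      push_cast; ring
    · rw [show 2 * ((0 : ℕ) : ℤ) - ((n : ℤ) + 1) = -(n : ℤ) - 1 from by push_cast; ring]
      simp
  have step2 : ∑ i ∈ range (n + 1), f (2 * (i : ℤ) - n + 1) * (n.choose (i + 1) : ℚ)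
      = (∑ k ∈ range (n + 1), f (2 * (k : ℤ) - n - 1) * (n.choose k : ℚ)) - f (-(n : ℤ) - 1) := by
    have hA := Finset.sum_range_succ' (fun j => f (2 * (j : ℤ) - (n : ℤ) - 1) * (n.choose j : ℚ)) (n + 1)
    have hB := Finset.sum_range_succ (fun j => f (2 * (j : ℤ) - (n : ℤ) - 1) * (n.choose j : ℚ)) (n + 1)
    rw [Nat.choose_eq_zero_of_lt (show n < n + 1 by omega)] at hB
    have hA2 : ∑ i ∈ range (n + 1), f (2 * ((i + 1 : ℕ) : ℤ) - (n : ℤ) - 1) * (n.choose (i + 1) : ℚ)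
        = ∑ i ∈ range (n + 1), f (2 * (i : ℤ) - n + 1) * (n.choose (i + 1) : ℚ) := by
      refine Finset.sum_congr rfl fun i _ => ?_
      rw [show 2 * ((i + 1 : ℕ) : ℤ) - (n : ℤ) - 1 = 2 * (i : ℤ) - n + 1 from by push_cast; ring]
    have h00 : f (2 * ((0 : ℕ) : ℤ) - (n : ℤ) - 1) * (n.choose 0 : ℚ) = f (-(n : ℤ) - 1) := by
      rw [show 2 * ((0 : ℕ) : ℤ) - (n : ℤ) - 1 = -(n : ℤ) - 1 from by push_cast; ring]
      simp
    rw [hA2, h00] at hA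
    rw [hA] at hB
    push_cast at hB ⊢
    linarith
  rw [step1, Finset.sum_add_distrib, step2]
  have : ∑ k ∈ range (n + 1), (f (2 * (k : ℤ) - n - 1) + f (2 * (k : ℤ) - n + 1)) * (n.choose k : ℚ)
      = ∑ k ∈ range (n + 1), (f (2 * (k : ℤ) - n - 1) * (n.choose k : ℚ)
          + f (2 * (k : ℤ) - n + 1) * (n.choose k : ℚ)) := by
    refine Finset.sum_congr rfl fun k _ => by ring
  rw [this, Finset.sum_add_distrib]
  ring

lemma Sq_succ (n : ℕ) : Sq (n + 1) = Sq n + Tq n := by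
  have h0 : Sq (n + 1)
      = ∑ k ∈ range (n + 1), (Wq (2 * (k : ℤ) - n - 1) + Wq (2 * (k : ℤ) - n + 1)) * n.choose k := by
    rw [Sq, show ((n:ℕ) + 1 + 1) = n + 2 from rfl]
    rw [← pascal_step Wq n]
    refine Finset.sum_congr rfl fun k _ => ?_
    push_cast; ring_nf
  rw [h0]
  have h1 : ∀ k : ℕ, (Wq (2 * (k : ℤ) - n - 1) + Wq (2 * (k : ℤ) - n + 1))
      = Wq (-(2 * (k : ℤ) - n)) + Wq' (-(2 * (k : ℤ) - n)) := by
    intro k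
    have := PW1 (2 * (k : ℤ) - n)
    rw [show 2 * (k : ℤ) - (n : ℤ) - 1 = (2 * (k : ℤ) - n) - 1 by ring,
        show 2 * (k : ℤ) - (n : ℤ) + 1 = (2 * (k : ℤ) - n) + 1 by ring]
    exact this
  rw [Finset.sum_congr rfl fun k _ => by rw [h1 k]]
  have h2 : ∑ k ∈ range (n + 1), (Wq (-(2 * (k : ℤ) - n)) + Wq' (-(2 * (k : ℤ) - n))) * n.choose k
      = ∑ k ∈ range (n + 1), (Wq (2 * (k : ℤ) - n) + Wq' (2 * (k : ℤ) - n)) * n.choose k := by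
    have := sym_sum (fun m => Wq m + Wq' m) n
    rw [show (∑ k ∈ range (n + 1), (Wq (-(2 * (k : ℤ) - n)) + Wq' (-(2 * (k : ℤ) - n))) * n.choose k)
        = ∑ k ∈ range (n + 1), (fun m => Wq m + Wq' m) ((n : ℤ) - 2 * k) * n.choose k from
      Finset.sum_congr rfl fun k _ => by rw [show ((n : ℤ) - 2 * k) = -(2 * (k : ℤ) - n) by ring]]
    rw [← this]
  rw [h2, Sq, Tq, ← Finset.sum_add_distrib]
  refine Finset.sum_congr rfl fun k _ => by ring

lemma Tq_succ (n : ℕ) : Tq (n + 1) = Sq n := by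
  have h0 : Tq (n + 1)
      = ∑ k ∈ range (n + 1), (Wq' (2 * (k : ℤ) - n - 1) + Wq' (2 * (k : ℤ) - n + 1)) * n.choose k := by
    rw [Tq, show ((n:ℕ) + 1 + 1) = n + 2 from rfl]
    rw [← pascal_step Wq' n]
    refine Finset.sum_congr rfl fun k _ => ?_
    push_cast; ring_nf
  have h0' : Tq (n + 1)
      = ∑ k ∈ range (n + 1), (Wq' (-(2 * (k : ℤ) - n) - 1) + Wq' (-(2 * (k : ℤ) - n) + 1)) * n.choose k := by
    rw [h0]
    have := sym_sum (fun m => Wq' (m - 1) + Wq' (m + 1)) n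
    rw [show (∑ k ∈ range (n + 1), (Wq' (2 * (k : ℤ) - n - 1) + Wq' (2 * (k : ℤ) - n + 1)) * n.choose k)
        = ∑ k ∈ range (n + 1), (fun m => Wq' (m - 1) + Wq' (m + 1)) (2 * (k : ℤ) - n) * n.choose k from rfl]
    rw [this]
    refine Finset.sum_congr rfl fun k _ => ?_
    rw [show (n : ℤ) - 2 * k = -(2 * (k : ℤ) - n) by ring]
  have hsym : ∑ k ∈ range (n + 1), Wq (-(2 * (k : ℤ) - n)) * n.choose k = Sq n := by
    have := sym_sum Wq n
    rw [show (∑ k ∈ range (n + 1), Wq (-(2 * (k : ℤ) - n)) * n.choose k)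
        = ∑ k ∈ range (n + 1), Wq ((n : ℤ) - 2 * k) * n.choose k from
      Finset.sum_congr rfl fun k _ => by rw [show -(2 * (k : ℤ) - n) = (n : ℤ) - 2 * k by ring]]
    rw [← this, Sq]
  have key : Tq (n + 1) + Tq (n + 1) = Sq n + Sq n := by
    nth_rewrite 1 [h0]
    nth_rewrite 1 [h0']
    rw [← Finset.sum_add_distrib]
    have : ∀ k ∈ range (n + 1),
        ((Wq' (2 * (k : ℤ) - n - 1) + Wq' (2 * (k : ℤ) - n + 1)) * n.choose k
          + (Wq' (-(2 * (k : ℤ) - n) - 1) + Wq' (-(2 * (k : ℤ) - n) + 1)) * n.choose k)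
        = (Wq (2 * (k : ℤ) - n) + Wq (-(2 * (k : ℤ) - n))) * n.choose k := by
      intro k _
      have := PW2 (2 * (k : ℤ) - n)
      rw [show 2 * (k : ℤ) - (n : ℤ) - 1 = (2 * (k : ℤ) - n) - 1 by ring,
          show 2 * (k : ℤ) - (n : ℤ) + 1 = (2 * (k : ℤ) - n) + 1 by ring,
          ← add_mul, this]
    rw [Finset.sum_congr rfl this]
    rw [show (∑ k ∈ range (n + 1),
        (Wq (2 * (k : ℤ) - n) + Wq (-(2 * (k : ℤ) - n))) * n.choose k)
        = ∑ k ∈ range (n + 1), (Wq (2 * (k : ℤ) - n) * n.choose k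
            + Wq (-(2 * (k : ℤ) - n)) * n.choose k) from
      Finset.sum_congr rfl fun k _ => by ring]
    rw [Finset.sum_add_distrib, hsym, ← Sq]
  linarith

lemma fib_ST (n : ℕ) : Sq n = Nat.fib (n + 1) ∧ Tq n = Nat.fib n := by
  induction n with
  | zero =>
    constructor <;> simp [Sq, Tq, Wq, Wq']
  | succ n ih =>
    refine ⟨?_, ?_⟩
    · rw [Sq_succ, ih.1, ih.2, Nat.fib_add_two]
      push_cast; ring
    · rw [Tq_succ, ih.1]

end SchurAux

lemma reindex (n : ℕ) (e : ℤ → ℤ) (Wf : ℤ → ℚ)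
    (hinj : Function.Injective e)
    (hbd : ∀ h : ℤ, 0 ≤ e h → e h ≤ (n : ℤ) → h ∈ Finset.Icc (-(n : ℤ) - 2) ((n : ℤ) + 2))
    (hw : ∀ h : ℤ, Wf (2 * e h - n) = (-1 : ℚ) ^ h)
    (hsurj : ∀ k : ℕ, k ≤ n → Wf (2 * (k : ℤ) - n) ≠ 0 → ∃ h : ℤ, e h = k) :
    (∑ᶠ h : ℤ, (-1 : ℚ) ^ h * (if 0 ≤ e h then (n.choose (e h).toNat : ℚ) else 0))
      = ∑ k ∈ range (n + 1), Wf (2 * (k : ℤ) - n) * n.choose k := by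
  set F : ℤ → ℚ := fun h => (-1 : ℚ) ^ h * (if 0 ≤ e h then (n.choose (e h).toNat : ℚ) else 0)
    with hF
  have hzero : ∀ h : ℤ, F h ≠ 0 → 0 ≤ e h ∧ e h ≤ (n : ℤ) := by
    intro h hFh
    by_cases h0 : 0 ≤ e h
    · refine ⟨h0, ?_⟩
      by_contra hgt
      push_neg at hgt
      have hlt : n < (e h).toNat := by omega
      rw [hF] at hFh
      simp only [if_pos h0, Nat.choose_eq_zero_of_lt hlt] at hFh
      simp at hFh
    · rw [hF] at hFh
      simp [h0] at hFh
  have hsupp : Function.support F ⊆ (Finset.Icc (-(n : ℤ) - 2) ((n : ℤ) + 2) : Finset ℤ) := by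
    intro h hh
    obtain ⟨h0, h1⟩ := hzero h hh
    exact_mod_cast hbd h h0 h1
  rw [finsum_eq_sum_of_support_subset F hsupp]
  set s : Finset ℤ := Finset.Icc (-(n : ℤ) - 2) ((n : ℤ) + 2) with hs
  set t : Finset ℤ := s.filter (fun h => 0 ≤ e h ∧ e h ≤ (n : ℤ)) with ht
  have h1 : ∑ h ∈ s, F h = ∑ h ∈ t, F h :=
    (Finset.sum_filter_of_ne (fun h _ hFh => hzero h hFh)).symm
  have h2 : ∑ h ∈ t, F h = ∑ h ∈ t, Wf (2 * e h - n) * n.choose (e h).toNat := by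
    refine Finset.sum_congr rfl fun h hh => ?_
    rw [ht, Finset.mem_filter] at hh
    rw [hF]
    simp only [if_pos hh.2.1]
    rw [hw h]
  have h3 : ∑ h ∈ t, Wf (2 * e h - n) * (n.choose (e h).toNat : ℚ)
      = ∑ k ∈ t.image (fun h => (e h).toNat), Wf (2 * (k : ℤ) - n) * n.choose k := by
    rw [Finset.sum_image]
    · refine Finset.sum_congr rfl fun h hh => ?_
      rw [ht, Finset.mem_filter] at hh
      rw [show (((e h).toNat : ℤ)) = e h from by omega]
    · intro a ha b hb hab
      rw [Finset.mem_coe, Finset.mem_filter] at ha hb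
      beta_reduce at hab
      exact hinj (by omega)
  have h4 : t.image (fun h => (e h).toNat) ⊆ range (n + 1) := by
    intro k hk
    rw [Finset.mem_image] at hk
    obtain ⟨h, hh, hkh⟩ := hk
    rw [ht, Finset.mem_filter] at hh
    rw [Finset.mem_range]
    omega
  have h5 : ∀ k ∈ range (n + 1), k ∉ t.image (fun h => (e h).toNat) →
      Wf (2 * (k : ℤ) - n) * (n.choose k : ℚ) = 0 := by
    intro k hk hki
    by_contra hne
    have hWne : Wf (2 * (k : ℤ) - n) ≠ 0 := fun w => hne (by rw [w, zero_mul])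
    rw [Finset.mem_range] at hk
    obtain ⟨h, hh⟩ := hsurj k (by omega) hWne
    have h0 : 0 ≤ e h := by omega
    have h1' : e h ≤ (n : ℤ) := by omega
    have : h ∈ t := by
      rw [ht, Finset.mem_filter]
      exact ⟨hbd h h0 h1', h0, h1'⟩
    exact hki (Finset.mem_image.mpr ⟨h, this, by omega⟩)
  rw [h1, h2, h3, Finset.sum_subset h4 h5]

/-- Schur's identities: `F_{n+1} = ∑_{h ∈ ℤ} (-1)^h C(n, ⌊(n+5h)/2⌋)` and
`F_n = ∑_{h ∈ ℤ} (-1)^h C(n, ⌊(n+5h+2)/2⌋)`, where the binomial coefficient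
is taken to vanish outside `0 ≤ k ≤ n` (so the sums are finite). -/
theorem stmt_19 (n : ℕ) :
    ((Nat.fib (n + 1) : ℚ) = ∑ᶠ h : ℤ, (-1 : ℚ) ^ h *
      (if 0 ≤ Int.fdiv ((n : ℤ) + 5 * h) 2 then
        (Nat.choose n (Int.toNat (Int.fdiv ((n : ℤ) + 5 * h) 2)) : ℚ) else 0)) ∧
    ((Nat.fib n : ℚ) = ∑ᶠ h : ℤ, (-1 : ℚ) ^ h *
      (if 0 ≤ Int.fdiv ((n : ℤ) + 5 * h + 2) 2 then
        (Nat.choose n (Int.toNat (Int.fdiv ((n : ℤ) + 5 * h + 2) 2)) : ℚ) else 0)) := by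
  have hfd : ∀ m : ℤ, Int.fdiv m 2 = m / 2 := fun m => Int.fdiv_eq_ediv_of_nonneg m (by norm_num)
  constructor
  · have hR := reindex n (fun h => Int.fdiv ((n : ℤ) + 5 * h) 2) Wq
      (by
        intro a b hab
        simp only [hfd] at hab
        omega)
      (by
        intro h h0 h1
        simp only [hfd] at h0 h1
        rw [Finset.mem_Icc]
        omega)
      (by
        intro h
        rcases Int.even_or_odd h with ⟨t, ht⟩ | ⟨t, ht⟩
        · rw [Even.neg_zpow ⟨t, ht⟩, one_zpow]
          have hm : (2 * Int.fdiv ((n : ℤ) + 5 * h) 2 - n) % 10 = 0 ∨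
              (2 * Int.fdiv ((n : ℤ) + 5 * h) 2 - n) % 10 = 9 := by
            simp only [hfd]; omega
          unfold Wq
          rcases hm with hm | hm <;> simp [hm]
        · rw [Odd.neg_one_zpow ⟨t, ht⟩]
          have hm : (2 * Int.fdiv ((n : ℤ) + 5 * h) 2 - n) % 10 = 4 ∨
              (2 * Int.fdiv ((n : ℤ) + 5 * h) 2 - n) % 10 = 5 := by
            simp only [hfd]; omega
          unfold Wq
          rcases hm with hm | hm <;> simp [hm])
      (by
        intro k hk hW
        unfold Wq at hW
        split_ifs at hW with hc1 hc2
        · rcases hc1 with hc | hc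
          · exact ⟨(2 * (k : ℤ) - n) / 5, by simp only [hfd]; omega⟩
          · exact ⟨(2 * (k : ℤ) - n + 1) / 5, by simp only [hfd]; omega⟩
        · rcases hc2 with hc | hc
          · exact ⟨(2 * (k : ℤ) - n + 1) / 5, by simp only [hfd]; omega⟩
          · exact ⟨(2 * (k : ℤ) - n) / 5, by simp only [hfd]; omega⟩
        · exact absurd rfl hW)
    rw [← (fib_ST n).1, Sq]
    exact hR.symm
  · have hR := reindex n (fun h => Int.fdiv ((n : ℤ) + 5 * h + 2) 2) Wq'
      (by
        intro a b hab
        simp only [hfd] at hab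
        omega)
      (by
        intro h h0 h1
        simp only [hfd] at h0 h1
        rw [Finset.mem_Icc]
        omega)
      (by
        intro h
        rcases Int.even_or_odd h with ⟨t, ht⟩ | ⟨t, ht⟩
        · rw [Even.neg_zpow ⟨t, ht⟩, one_zpow]
          have hm : (2 * Int.fdiv ((n : ℤ) + 5 * h + 2) 2 - n) % 10 = 1 ∨
              (2 * Int.fdiv ((n : ℤ) + 5 * h + 2) 2 - n) % 10 = 2 := by
            simp only [hfd]; omega
          unfold Wq'
          rcases hm with hm | hm <;> simp [hm]
        · rw [Odd.neg_one_zpow ⟨t, ht⟩]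
          have hm : (2 * Int.fdiv ((n : ℤ) + 5 * h + 2) 2 - n) % 10 = 6 ∨
              (2 * Int.fdiv ((n : ℤ) + 5 * h + 2) 2 - n) % 10 = 7 := by
            simp only [hfd]; omega
          unfold Wq'
          rcases hm with hm | hm <;> simp [hm])
      (by
        intro k hk hW
        unfold Wq' at hW
        split_ifs at hW with hc1 hc2
        · rcases hc1 with hc | hc
          · exact ⟨(2 * (k : ℤ) - n - 1) / 5, by simp only [hfd]; omega⟩
          · exact ⟨(2 * (k : ℤ) - n - 2) / 5, by simp only [hfd]; omega⟩
        · rcases hc2 with hc | hc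
          · exact ⟨(2 * (k : ℤ) - n - 1) / 5, by simp only [hfd]; omega⟩
          · exact ⟨(2 * (k : ℤ) - n - 2) / 5, by simp only [hfd]; omega⟩
        · exact absurd rfl hW)
    rw [← (fib_ST n).2, Tq]
    exact hR.symm
end
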